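/- arXiv:1101.2679 — 2 statements merged into one kernel-verified Lean document; each statement's English description precedes it below -/
import Mathlib

section
/- For any probability measure ν on (a,b), the probability measures π_{ν,μ,σ} on (a,b) defined by π_{ν,μ,σ}(A) = (∫_A dy ∫_a^b g^{(a,b)}_{σ,μ}(x,y) ν(dx)) / (∫_a^b dy ∫_a^b g^{(a,b)}_{σ,μ}(x,y) ν(dx)) converge weakly, as μ → ∞, to the probability measure with density y ↦ ν((a,y]) / ∫_a^b ν((a,z]) dz with respect to Lebesgue measure on (a,b). In particular, for ν = δ_{x₀} with x₀ = (a+b)/2, the limit is the uniform distribution on [x₀, b), i.e. the measure A ↦ |A ∩ [x₀,b)|/(b−x₀). -/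
open MeasureTheory Set Filter

/-- The Green function of `L^{σ,μ} = (σ²/2) d²/dx² + μ d/dx` on `(a,b)` with Dirichlet
boundary conditions (the value on the diagonal `x = y` is irrelevant). -/
noncomputable def greenFn (a b σ μ x y : ℝ) : ℝ :=
  if x < y then
    σ ^ 2 / (2 * μ) *
      ((1 - Real.exp (-2 * μ / σ ^ 2 * (x - a))) / (Real.exp (-2 * μ / σ ^ 2 * (b - a)) - 1)) *
      (Real.exp (-2 * μ / σ ^ 2 * (b - y)) - 1)
  else
    σ ^ 2 / (2 * μ) *
      ((Real.exp (-2 * μ / σ ^ 2 * (b - x)) - 1) / (Real.exp (-2 * μ / σ ^ 2 * (b - a)) - 1)) *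
      Real.exp (-2 * μ / σ ^ 2 * (x - a)) * (Real.exp (-2 * μ / σ ^ 2 * (b - y)) - 1)

noncomputable def KFn (a b c x y : ℝ) : ℝ :=
  if x < y then
    (1 - Real.exp (-c * (x - a))) * (1 - Real.exp (-c * (b - y))) /
      (1 - Real.exp (-c * (b - a)))
  else
    (Real.exp (-c * (b - a)) - Real.exp (-c * (x - a))) * (1 - Real.exp (-c * (b - y))) /
      (1 - Real.exp (-c * (b - a)))

lemma greenFn_scale {a b σ μ : ℝ} (hab : a < b) (hσ : 0 < σ) (hμ : 0 < μ) (x y : ℝ) :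
    2 * μ / σ ^ 2 * greenFn a b σ μ x y = KFn a b (2 * μ / σ ^ 2) x y := by
  have hσ2 : (0:ℝ) < σ ^ 2 := by positivity
  have hσ0 : σ ≠ 0 := ne_of_gt hσ
  have hμ0 : μ ≠ 0 := ne_of_gt hμ
  have hc : (0:ℝ) < 2 * μ / σ ^ 2 := by positivity
  have harg : ∀ t : ℝ, -2 * μ / σ ^ 2 * t = -(2 * μ / σ ^ 2) * t := fun t => by ring
  have hR : Real.exp (-(2 * μ / σ ^ 2) * (b - a)) < 1 := by
    rw [Real.exp_lt_one_iff]
    have : (0:ℝ) < 2 * μ / σ ^ 2 * (b - a) := by apply mul_pos hc; linarith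
    linarith
  have hexpsub : Real.exp (-(2 * μ / σ ^ 2) * (b - x)) =
      Real.exp (-(2 * μ / σ ^ 2) * (b - a)) / Real.exp (-(2 * μ / σ ^ 2) * (x - a)) := by
    rw [← Real.exp_sub]; congr 1; ring
  unfold greenFn KFn
  rw [harg (x - a), harg (b - a), harg (b - y), harg (b - x), hexpsub]
  have hPne : Real.exp (-(2 * μ / σ ^ 2) * (x - a)) ≠ 0 := Real.exp_ne_zero _
  generalize Real.exp (-(2 * μ / σ ^ 2) * (x - a)) = P at hPne ⊢
  generalize Real.exp (-(2 * μ / σ ^ 2) * (b - y)) = Q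
  generalize hRdef : Real.exp (-(2 * μ / σ ^ 2) * (b - a)) = R at hR ⊢
  have hR1 : R - 1 ≠ 0 := by intro h; linarith
  have hR2 : (1:ℝ) - R ≠ 0 := by intro h; linarith
  split_ifs with h
  · field_simp
    ring
  · field_simp
    ring

lemma KFn_mem {a b c x y : ℝ} (hc : 0 < c) (hx : x ∈ Set.Ioo a b) (hy : y ∈ Set.Ioo a b) :
    KFn a b c x y ∈ Set.Icc (-1:ℝ) 1 := by
  obtain ⟨hax, hxb⟩ := hx
  obtain ⟨hay, hyb⟩ := hy
  have hp0 : 0 < Real.exp (-c * (x - a)) := Real.exp_pos _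
  have hp1 : Real.exp (-c * (x - a)) < 1 := by
    rw [Real.exp_lt_one_iff]; nlinarith
  have hq0 : 0 < Real.exp (-c * (b - y)) := Real.exp_pos _
  have hq1 : Real.exp (-c * (b - y)) < 1 := by
    rw [Real.exp_lt_one_iff]; nlinarith
  have hr0 : 0 < Real.exp (-c * (b - a)) := Real.exp_pos _
  have hrp : Real.exp (-c * (b - a)) < Real.exp (-c * (x - a)) := by
    apply Real.exp_lt_exp.mpr; nlinarith
  have hrq : Real.exp (-c * (b - a)) < Real.exp (-c * (b - y)) := by
    apply Real.exp_lt_exp.mpr; nlinarith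
  have hr1 : Real.exp (-c * (b - a)) < 1 := lt_trans hrp hp1
  have hden : 0 < 1 - Real.exp (-c * (b - a)) := by linarith
  unfold KFn
  split_ifs with h
  · constructor
    · have : 0 ≤ (1 - Real.exp (-c * (x - a))) * (1 - Real.exp (-c * (b - y))) /
          (1 - Real.exp (-c * (b - a))) := by
        apply div_nonneg _ hden.le; nlinarith
      linarith
    · rw [div_le_one hden]; nlinarith
  · constructor
    · rw [le_div_iff₀ hden]; nlinarith
    · rw [div_le_one hden]; nlinarith


lemma exp_neg_tendsto {t : ℝ} (ht : 0 < t) :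
    Tendsto (fun c : ℝ => Real.exp (-c * t)) atTop (nhds 0) := by
  have h1 : Tendsto (fun c : ℝ => -c * t) atTop atBot := by
    have h2 : Tendsto (fun c : ℝ => c * t) atTop atTop := tendsto_id.atTop_mul_const ht
    have h3 : (fun c : ℝ => -c * t) = (fun z : ℝ => -z) ∘ (fun c : ℝ => c * t) := by
      funext c; simp [neg_mul]
    rw [h3]
    exact tendsto_neg_atTop_atBot.comp h2
  exact Real.tendsto_exp_atBot.comp h1

lemma KFn_tendsto {a b x y : ℝ} (hx : x ∈ Set.Ioo a b) (hy : y ∈ Set.Ioo a b) :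
    Tendsto (fun c : ℝ => KFn a b c x y) atTop (nhds (if x < y then (1:ℝ) else 0)) := by
  have hp := exp_neg_tendsto (t := x - a) (by linarith [hx.1])
  have hq := exp_neg_tendsto (t := b - y) (by linarith [hy.2])
  have hr := exp_neg_tendsto (t := b - a) (by linarith [hx.1, hx.2])
  by_cases h : x < y
  · simp only [KFn, if_pos h]
    have : Tendsto (fun c : ℝ =>
        (1 - Real.exp (-c * (x - a))) * (1 - Real.exp (-c * (b - y))) /
          (1 - Real.exp (-c * (b - a)))) atTop
        (nhds ((1 - 0) * (1 - 0) / (1 - 0))) :=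
      ((tendsto_const_nhds.sub hp).mul (tendsto_const_nhds.sub hq)).div
        (tendsto_const_nhds.sub hr) (by norm_num)
    simpa using this
  · simp only [KFn, if_neg h]
    have : Tendsto (fun c : ℝ =>
        (Real.exp (-c * (b - a)) - Real.exp (-c * (x - a))) * (1 - Real.exp (-c * (b - y))) /
          (1 - Real.exp (-c * (b - a)))) atTop
        (nhds ((0 - 0) * (1 - 0) / (1 - 0))) :=
      ((hr.sub hp).mul (tendsto_const_nhds.sub hq)).div
        (tendsto_const_nhds.sub hr) (by norm_num)
    simpa using this

lemma KFn_jointMeasurable (a b c : ℝ) : Measurable fun p : ℝ × ℝ => KFn a b c p.2 p.1 := by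
  unfold KFn
  refine Measurable.ite (measurableSet_lt measurable_snd measurable_fst) ?_ ?_ <;> fun_prop

lemma KFn_measurable_x (a b c y : ℝ) : Measurable fun x : ℝ => KFn a b c x y := by
  unfold KFn
  refine Measurable.ite measurableSet_Iio ?_ ?_ <;> fun_prop

lemma inner_tendsto {a b σ : ℝ} (hab : a < b) (hσ : 0 < σ) (ν : Measure ℝ)
    [IsProbabilityMeasure ν] (hνsupp : ν (Set.Ioo a b)ᶜ = 0) {y : ℝ} (hy : y ∈ Set.Ioo a b) :
    Tendsto (fun μ : ℝ => ∫ x, KFn a b (2 * μ / σ ^ 2) x y ∂ν) atTop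
      (nhds (ν (Set.Iio y)).toReal) := by
  have hxae : ∀ᵐ x ∂ν, x ∈ Set.Ioo a b := by
    exact MeasureTheory.mem_ae_iff.mpr hνsupp
  have hcμ : Tendsto (fun μ : ℝ => 2 * μ / σ ^ 2) atTop atTop := by
    have h2 : (0:ℝ) < 2 / σ ^ 2 := by positivity
    refine (tendsto_id.atTop_mul_const h2).congr fun μ => ?_
    simp only [id_eq]; ring
  have key : Tendsto (fun μ : ℝ => ∫ x, KFn a b (2 * μ / σ ^ 2) x y ∂ν) atTop
      (nhds (∫ x, (if x < y then (1:ℝ) else 0) ∂ν)) := by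
    apply MeasureTheory.tendsto_integral_filter_of_dominated_convergence (fun _ => (1:ℝ))
    · exact Eventually.of_forall fun μ => (KFn_measurable_x a b _ y).aestronglyMeasurable
    · filter_upwards [eventually_gt_atTop (0:ℝ)] with μ hμ
      filter_upwards [hxae] with x hx
      have hc : (0:ℝ) < 2 * μ / σ ^ 2 := by positivity
      have hm := KFn_mem (c := 2 * μ / σ ^ 2) hc hx hy
      rw [Real.norm_eq_abs, abs_le]; exact ⟨hm.1, hm.2⟩
    · exact integrable_const 1
    · filter_upwards [hxae] with x hx
      exact (KFn_tendsto hx hy).comp hcμ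
  have heq : ∫ x, (if x < y then (1:ℝ) else 0) ∂ν = (ν (Set.Iio y)).toReal := by
    have h1 : (fun x : ℝ => if x < y then (1:ℝ) else 0) = (Set.Iio y).indicator 1 := by
      funext x; by_cases h : x < y <;> simp [Set.indicator, Set.mem_Iio, h]
    rw [h1, MeasureTheory.integral_indicator_one measurableSet_Iio]
    rfl
  rwa [heq] at key

lemma measure_Iio_eq {a b : ℝ} (ν : Measure ℝ) (hνsupp : ν (Set.Ioo a b)ᶜ = 0)
    {y : ℝ} (hy : y ∈ Set.Ioo a b) (hy0 : ν {y} = 0) :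
    ν (Set.Iio y) = ν (Set.Ioc a y) := by
  have h1 : ν (Set.Iio y) = ν (Set.Ioo a y) := by
    apply le_antisymm
    · calc ν (Set.Iio y) ≤ ν (Set.Ioo a y ∪ (Set.Ioo a b)ᶜ) := by
            apply measure_mono
            intro x hx
            by_cases h : x ∈ Set.Ioo a b
            · exact Or.inl ⟨h.1, hx⟩
            · exact Or.inr h
        _ ≤ ν (Set.Ioo a y) + ν (Set.Ioo a b)ᶜ := measure_union_le _ _
        _ = ν (Set.Ioo a y) := by rw [hνsupp, add_zero]
    · exact measure_mono fun x hx => hx.2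
  have h2 : ν (Set.Ioc a y) = ν (Set.Ioo a y) := by
    apply le_antisymm
    · have hsub : Set.Ioc a y ⊆ Set.Ioo a y ∪ {y} := by
        intro x hx
        rcases eq_or_lt_of_le hx.2 with h | h
        · exact Or.inr (by simp [h])
        · exact Or.inl ⟨hx.1, h⟩
      calc ν (Set.Ioc a y) ≤ ν (Set.Ioo a y) + ν {y} :=
            le_trans (measure_mono hsub) (measure_union_le _ _)
        _ = ν (Set.Ioo a y) := by rw [hy0, add_zero]
    · exact measure_mono Set.Ioo_subset_Ioc_self
  rw [h1, h2]

lemma outer_tendsto {a b σ : ℝ} (hab : a < b) (hσ : 0 < σ) (ν : Measure ℝ)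
    [IsProbabilityMeasure ν] (hνsupp : ν (Set.Ioo a b)ᶜ = 0)
    (f : ℝ → ℝ) (hf : Continuous f) (C : ℝ) (hC : ∀ y, |f y| ≤ C) :
    Tendsto (fun μ : ℝ => ∫ y in Set.Ioo a b, f y * ∫ x, KFn a b (2 * μ / σ ^ 2) x y ∂ν) atTop
      (nhds (∫ y in Set.Ioo a b, f y * (ν (Set.Ioc a y)).toReal)) := by
  haveI : Fact ((volume : Measure ℝ) (Set.Ioo a b) < ⊤) := ⟨measure_Ioo_lt_top⟩
  have hxae : ∀ᵐ x ∂ν, x ∈ Set.Ioo a b := by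
    exact MeasureTheory.mem_ae_iff.mpr hνsupp
  have hmeasInt : ∀ c : ℝ, StronglyMeasurable fun y : ℝ => ∫ x, KFn a b c x y ∂ν :=
    fun c => (KFn_jointMeasurable a b c).stronglyMeasurable.integral_prod_right'
  apply MeasureTheory.tendsto_integral_filter_of_dominated_convergence (fun _ => C)
  · exact Eventually.of_forall fun μ =>
      (hf.aestronglyMeasurable.mul (hmeasInt _).aestronglyMeasurable)
  · filter_upwards [eventually_gt_atTop (0:ℝ)] with μ hμ
    refine (MeasureTheory.ae_restrict_mem measurableSet_Ioo).mono fun y hy => ?_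
    have hc : (0:ℝ) < 2 * μ / σ ^ 2 := by positivity
    have hI : ‖∫ x, KFn a b (2 * μ / σ ^ 2) x y ∂ν‖ ≤ 1 := by
      have := MeasureTheory.norm_integral_le_of_norm_le (integrable_const (1:ℝ))
        (hxae.mono fun x hx => by
          have hm := KFn_mem (c := 2 * μ / σ ^ 2) hc hx hy
          rw [Real.norm_eq_abs, abs_le]; exact ⟨hm.1, hm.2⟩)
      simpa using this
    calc ‖f y * ∫ x, KFn a b (2 * μ / σ ^ 2) x y ∂ν‖
        = |f y| * ‖∫ x, KFn a b (2 * μ / σ ^ 2) x y ∂ν‖ := by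
          rw [norm_mul, Real.norm_eq_abs]
      _ ≤ C * 1 := mul_le_mul (hC y) hI (norm_nonneg _) (le_trans (abs_nonneg _) (hC y))
      _ = C := mul_one C
  · exact integrable_const C
  · have haeatom : ∀ᵐ y ∂(volume.restrict (Set.Ioo a b)), ν {y} = 0 := by
      apply ae_restrict_of_ae
      have hcnt : Set.Countable {y : ℝ | ν {y} ≠ 0} := by
        have h := MeasureTheory.Measure.countable_meas_pos_of_disjoint_iUnion (μ := ν)
          (As := fun y : ℝ => {y}) (fun y => measurableSet_singleton y)
          (fun i j hij => by
            simp only [Function.onFun]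
            exact Set.disjoint_singleton.mpr hij)
        convert h using 1
        ext y; simp [pos_iff_ne_zero]
      rw [MeasureTheory.ae_iff]
      exact hcnt.measure_zero _
    filter_upwards [MeasureTheory.ae_restrict_mem measurableSet_Ioo, haeatom] with y hy hy0
    have h := (inner_tendsto hab hσ ν hνsupp hy).const_mul (f y)
    rwa [measure_Iio_eq ν hνsupp hy hy0] at h

lemma denom_pos {a b : ℝ} (hab : a < b) (ν : Measure ℝ) [IsProbabilityMeasure ν]
    (hνsupp : ν (Set.Ioo a b)ᶜ = 0) :
    0 < ∫ z in Set.Ioo a b, (ν (Set.Ioc a z)).toReal := by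
  haveI : Fact ((volume : Measure ℝ) (Set.Ioo a b) < ⊤) := ⟨measure_Ioo_lt_top⟩
  have hmono : Monotone fun z : ℝ => (ν (Set.Ioc a z)).toReal := fun z w hzw =>
    ENNReal.toReal_mono (measure_ne_top ν _) (measure_mono (Set.Ioc_subset_Ioc_right hzw))
  have hint : MeasureTheory.IntegrableOn (fun z : ℝ => (ν (Set.Ioc a z)).toReal)
      (Set.Ioo a b) := by
    apply MeasureTheory.Integrable.mono' (integrable_const (1:ℝ))
      hmono.measurable.aestronglyMeasurable
    refine Eventually.of_forall fun z => ?_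
    rw [Real.norm_eq_abs, abs_of_nonneg ENNReal.toReal_nonneg]
    calc (ν (Set.Ioc a z)).toReal ≤ (1 : ENNReal).toReal :=
          ENNReal.toReal_mono (by norm_num) prob_le_one
      _ = 1 := by simp
  have hIoo : ν (Set.Ioo a b) = 1 := by
    apply le_antisymm prob_le_one
    calc (1:ENNReal) = ν Set.univ := measure_univ.symm
      _ ≤ ν (Set.Ioo a b ∪ (Set.Ioo a b)ᶜ) := by rw [Set.union_compl_self]
      _ ≤ ν (Set.Ioo a b) + ν (Set.Ioo a b)ᶜ := measure_union_le _ _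
      _ = ν (Set.Ioo a b) := by rw [hνsupp, add_zero]
  set z : ℕ → ℝ := fun n => b - (b - a) / (n + 1) with hz
  have hzlt : ∀ n : ℕ, z n < b := by
    intro n
    have : (0:ℝ) < (b - a) / (n + 1) := div_pos (by linarith) (by positivity)
    simp only [hz]; linarith
  have hz_mono : Monotone fun n : ℕ => Set.Ioc a (z n) := by
    intro n m hnm
    apply Set.Ioc_subset_Ioc_right
    have h1 : ((n:ℝ) + 1) ≤ (m:ℝ) + 1 := by exact_mod_cast Nat.succ_le_succ hnm
    have h2 : (b - a) / ((m:ℝ) + 1) ≤ (b - a) / ((n:ℝ) + 1) := by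
      apply div_le_div_of_nonneg_left (by linarith) (by positivity) h1
    simp only [hz]; linarith
  have hz_union : ⋃ n, Set.Ioc a (z n) = Set.Ioo a b := by
    ext x
    simp only [Set.mem_iUnion, Set.mem_Ioc, Set.mem_Ioo]
    constructor
    · rintro ⟨n, hax, hxz⟩
      exact ⟨hax, lt_of_le_of_lt hxz (hzlt n)⟩
    · rintro ⟨hax, hxb⟩
      obtain ⟨n, hn⟩ := exists_nat_ge ((b - a) / (b - x))
      refine ⟨n, hax, ?_⟩
      have hbx : (0:ℝ) < b - x := by linarith
      have hn1 : (0:ℝ) < (n:ℝ) + 1 := by positivity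
      have h1 : (b - a) / (b - x) ≤ (n:ℝ) + 1 := le_trans hn (by linarith)
      have h2 : b - a ≤ ((n:ℝ) + 1) * (b - x) := by rwa [div_le_iff₀ hbx] at h1
      have h3 : (b - a) / ((n:ℝ) + 1) ≤ b - x := by
        rw [div_le_iff₀ hn1]; nlinarith
      simp only [hz]; linarith
  have hto := tendsto_measure_iUnion_atTop (μ := ν) hz_mono
  rw [hz_union, hIoo] at hto
  have hev : ∀ᶠ n : ℕ in atTop, 0 < ν (Set.Ioc a (z n)) :=
    hto.eventually (eventually_gt_nhds zero_lt_one)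
  obtain ⟨n, hnpos, hn1⟩ := (hev.and (eventually_ge_atTop 1)).exists
  have hzn_ab : z n ∈ Set.Ioo a b := by
    refine ⟨?_, hzlt n⟩
    have h1 : (1:ℝ) ≤ (n:ℝ) := by exact_mod_cast hn1
    have h2 : (b - a) / ((n:ℝ) + 1) ≤ (b - a) / 2 := by
      apply div_le_div_of_nonneg_left (by linarith) (by norm_num) (by linarith)
    simp only [hz]; linarith
  set ε := (ν (Set.Ioc a (z n))).toReal with hε
  have hε0 : 0 < ε := ENNReal.toReal_pos hnpos.ne' (measure_ne_top ν _)
  have hsub : Set.Ioo (z n) b ⊆ Set.Ioo a b := Set.Ioo_subset_Ioo_left hzn_ab.1.le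
  have h1 : ε * ((volume : Measure ℝ) (Set.Ioo (z n) b)).toReal ≤
      ∫ w in Set.Ioo (z n) b, (ν (Set.Ioc a w)).toReal := by
    have := MeasureTheory.setIntegral_ge_of_const_le measurableSet_Ioo measure_Ioo_lt_top.ne
      (fun w hw => hmono hw.1.le) (hint.mono_set hsub)
    simpa [Measure.real, smul_eq_mul, mul_comm] using this
  have hvol : ((volume : Measure ℝ) (Set.Ioo (z n) b)).toReal = b - z n := by
    rw [Real.volume_Ioo]; exact ENNReal.toReal_ofReal (by linarith [hzn_ab.2])
  have h2 : ∫ w in Set.Ioo (z n) b, (ν (Set.Ioc a w)).toReal ≤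
      ∫ w in Set.Ioo a b, (ν (Set.Ioc a w)).toReal := by
    apply MeasureTheory.setIntegral_mono_set hint
      (Eventually.of_forall fun w => ENNReal.toReal_nonneg)
      (HasSubset.Subset.eventuallyLE hsub)
  have h3 : 0 < ε * (b - z n) := mul_pos hε0 (by linarith [hzn_ab.2])
  rw [← hvol] at h3
  linarith

/-- As `μ → ∞`, the probability measures
`π_{ν,μ,σ}(A) = (∫_A ∫ g_{σ,μ}(x,y) ν(dx) dy) / (∫_a^b ∫ g_{σ,μ}(x,y) ν(dx) dy)`
converge weakly to the measure with Lebesgue density `y ↦ ν((a,y]) / ∫_a^b ν((a,z]) dz`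
on `(a,b)`. In particular, for `ν = δ_{x₀}` with `x₀ = (a+b)/2`, the limit is the
uniform distribution on `[x₀, b)`. -/
theorem invariant_measure_large_drift_limit (a b σ : ℝ) (hab : a < b) (hσ : 0 < σ)
    (ν : Measure ℝ) (hν : IsProbabilityMeasure ν) (hνsupp : ν (Set.Ioo a b)ᶜ = 0) :
    (∀ f : ℝ → ℝ, Continuous f → (∃ C : ℝ, ∀ y, |f y| ≤ C) →
      Tendsto (fun μ : ℝ =>
          (∫ y in Set.Ioo a b, f y * ∫ x, greenFn a b σ μ x y ∂ν) /
            (∫ y in Set.Ioo a b, ∫ x, greenFn a b σ μ x y ∂ν))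
        atTop
        (nhds ((∫ y in Set.Ioo a b, f y * (ν (Set.Ioc a y)).toReal) /
          (∫ z in Set.Ioo a b, (ν (Set.Ioc a z)).toReal)))) ∧
    (ν = Measure.dirac ((a + b) / 2) →
      ∀ f : ℝ → ℝ, Continuous f → (∃ C : ℝ, ∀ y, |f y| ≤ C) →
        Tendsto (fun μ : ℝ =>
            (∫ y in Set.Ioo a b, f y * greenFn a b σ μ ((a + b) / 2) y) /
              (∫ y in Set.Ioo a b, greenFn a b σ μ ((a + b) / 2) y))
          atTop
          (nhds ((b - (a + b) / 2)⁻¹ * ∫ y in Set.Ico ((a + b) / 2) b, f y))) := by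
  have main : ∀ f : ℝ → ℝ, Continuous f → (∃ C : ℝ, ∀ y, |f y| ≤ C) →
      Tendsto (fun μ : ℝ =>
          (∫ y in Set.Ioo a b, f y * ∫ x, greenFn a b σ μ x y ∂ν) /
            (∫ y in Set.Ioo a b, ∫ x, greenFn a b σ μ x y ∂ν))
        atTop
        (nhds ((∫ y in Set.Ioo a b, f y * (ν (Set.Ioc a y)).toReal) /
          (∫ z in Set.Ioo a b, (ν (Set.Ioc a z)).toReal))) := by
    rintro f hf ⟨C, hC⟩
    have hnum := outer_tendsto hab hσ ν hνsupp f hf C hC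
    have hden := outer_tendsto hab hσ ν hνsupp (fun _ => 1) continuous_const 1
      (fun y => by norm_num)
    simp only [one_mul] at hden
    have hL := denom_pos hab ν hνsupp
    have hdiv := hnum.div hden hL.ne'
    apply Filter.Tendsto.congr' _ hdiv
    filter_upwards [eventually_gt_atTop (0:ℝ)] with μ hμ
    have hc : (0:ℝ) < 2 * μ / σ ^ 2 := by positivity
    have hK : ∀ y : ℝ, ∫ x, KFn a b (2 * μ / σ ^ 2) x y ∂ν =
        (2 * μ / σ ^ 2) * ∫ x, greenFn a b σ μ x y ∂ν := by
      intro y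
      rw [← MeasureTheory.integral_const_mul]
      congr 1
      funext x
      exact (greenFn_scale hab hσ hμ x y).symm
    have h1 : (∫ y in Set.Ioo a b, f y * ∫ x, KFn a b (2 * μ / σ ^ 2) x y ∂ν)
        = (2 * μ / σ ^ 2) * ∫ y in Set.Ioo a b, f y * ∫ x, greenFn a b σ μ x y ∂ν := by
      rw [← MeasureTheory.integral_const_mul]
      congr 1
      funext y
      rw [hK y]; ring
    have h2 : (∫ y in Set.Ioo a b, ∫ x, KFn a b (2 * μ / σ ^ 2) x y ∂ν)
        = (2 * μ / σ ^ 2) * ∫ y in Set.Ioo a b, ∫ x, greenFn a b σ μ x y ∂ν := by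
      rw [← MeasureTheory.integral_const_mul]
      congr 1
      funext y
      exact hK y
    simp only [Pi.div_apply]
    rw [h1, h2, mul_div_mul_left _ _ (ne_of_gt hc)]
  refine ⟨main, ?_⟩
  intro hdirac f hf hb
  have hx₀ : (a + b) / 2 ∈ Set.Ioo a b := ⟨by linarith, by linarith⟩
  have h := main f hf hb
  rw [hdirac] at h
  simp only [MeasureTheory.integral_dirac] at h
  have hind : ∀ g : ℝ → ℝ,
      (∫ y in Set.Ioo a b, g y * ((Measure.dirac ((a + b) / 2)) (Set.Ioc a y)).toReal)
        = ∫ y in Set.Ico ((a + b) / 2) b, g y := by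
    intro g
    have h1 : Set.EqOn (fun y => g y * ((Measure.dirac ((a + b) / 2)) (Set.Ioc a y)).toReal)
        ((Set.Ici ((a + b) / 2)).indicator g) (Set.Ioo a b) := by
      intro y hy
      simp only
      rw [Measure.dirac_apply' _ measurableSet_Ioc]
      by_cases hc : (a + b) / 2 ≤ y
      · have hmem : (a + b) / 2 ∈ Set.Ioc a y := ⟨hx₀.1, hc⟩
        simp [Set.indicator_of_mem hmem, Set.indicator_of_mem (Set.mem_Ici.mpr hc)]
      · have hmem : (a + b) / 2 ∉ Set.Ioc a y := fun hmm => hc hmm.2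
        simp [Set.indicator_of_notMem hmem,
          Set.indicator_of_notMem (fun hmm => hc (Set.mem_Ici.mp hmm))]
    have hset : Set.Ioo a b ∩ Set.Ici ((a + b) / 2) = Set.Ico ((a + b) / 2) b := by
      ext w
      constructor
      · rintro ⟨⟨_, hwb⟩, hw⟩; exact ⟨hw, hwb⟩
      · rintro ⟨hw, hwb⟩; exact ⟨⟨lt_of_lt_of_le hx₀.1 hw, hwb⟩, hw⟩
    rw [MeasureTheory.setIntegral_congr_fun measurableSet_Ioo h1,
      MeasureTheory.setIntegral_indicator measurableSet_Ici, hset]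
  have hden : (∫ z in Set.Ioo a b, ((Measure.dirac ((a + b) / 2)) (Set.Ioc a z)).toReal)
      = b - (a + b) / 2 := by
    have h1 : (∫ z in Set.Ioo a b, ((Measure.dirac ((a + b) / 2)) (Set.Ioc a z)).toReal)
        = ∫ _ in Set.Ico ((a + b) / 2) b, (1:ℝ) := by
      have := hind (fun _ => 1); simpa only [one_mul] using this
    rw [h1, MeasureTheory.setIntegral_const, Measure.real, Real.volume_Ico, smul_eq_mul, mul_one]
    exact ENNReal.toReal_ofReal (by linarith)
  rw [hind f, hden] at h
  rw [inv_mul_eq_div]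
  exact h
end

section
/- Let a < b, x₀ = (a+b)/2, σ > 0 and μ > 0. For x ∈ (a, x₀) let τ^x = inf{t > 0 : x + μt + σB_t ∉ (a, x₀)} be the first exit time of the Brownian motion with variance parameter σ and drift μ started at x from the interval (a, x₀). Then for all t > 0, sup_{x∈(a,x₀)} P(τ^x > t) ≤ e^{(b−a)μ/(2σ²)} · e^{−μ²t/(2σ²)}. -/
open MeasureTheory ProbabilityTheory Set Filter

open scoped Classical in
/-- A standard one-dimensional Brownian motion started at `0`: continuous paths,
`B 0 = 0`, Gaussian increments `B t - B s ~ N(0, t-s)` and independent increments. -/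
structure IsStandardBM {Ω : Type} [MeasurableSpace Ω] (P : Measure Ω) (B : ℝ → Ω → ℝ) : Prop where
  isProb : IsProbabilityMeasure P
  start : ∀ ω, B 0 ω = 0
  meas : ∀ t, Measurable (B t)
  cont : ∀ ω, Continuous fun t => B t ω
  gauss : ∀ s t : ℝ, 0 ≤ s → s ≤ t →
    P.map (fun ω => B t ω - B s ω) = gaussianReal 0 (Real.toNNReal (t - s))
  indep : ∀ (n : ℕ) (τ : ℕ → ℝ), Monotone τ → 0 ≤ τ 0 →
    iIndepFun (m := fun _ : Fin n => (inferInstance : MeasurableSpace ℝ))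
      (fun i : Fin n => fun ω => B (τ (i.1 + 1)) ω - B (τ i.1) ω) P

/-- First exit time after 0 of the drifted Brownian motion `x + σ B_t + μ t` from `(c,d)`. -/
noncomputable def exitTime {Ω : Type} (c d σ μ x : ℝ) (B : ℝ → Ω → ℝ) (ω : Ω) : ℝ :=
  sInf {t : ℝ | 0 < t ∧ x + σ * B t ω + μ * t ∉ Set.Ioo c d}

lemma gaussian_Iic_le {v : NNReal} (hv : v ≠ 0) {C : ℝ} (hC : C ≤ 0) :
    (gaussianReal 0 v) (Set.Iic C) ≤ ENNReal.ofReal (Real.exp (-C ^ 2 / (2 * v))) := by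
  have hv' : (0:ℝ) < (v:ℝ) := by positivity
  have hs : (0:ℝ) ≤ -C / v := div_nonneg (by linarith) hv'.le
  have key : ∀ y : ℝ, Real.exp ((-C / v) * (C - y)) * gaussianPDFReal 0 v y
      = Real.exp (-C ^ 2 / (2 * v)) * gaussianPDFReal C v y := by
    intro y
    simp only [gaussianPDFReal]
    rw [mul_left_comm, mul_left_comm (Real.exp (-C ^ 2 / (2 * (v:ℝ))))]
    congr 1
    rw [← Real.exp_add, ← Real.exp_add]
    congr 1
    field_simp
    ring
  calc (gaussianReal 0 v) (Set.Iic C)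
      = ∫⁻ y in Set.Iic C, gaussianPDF 0 v y := gaussianReal_apply 0 hv _
    _ ≤ ∫⁻ y in Set.Iic C,
          ENNReal.ofReal (Real.exp ((-C / v) * (C - y)) * gaussianPDFReal 0 v y) := by
        refine setLIntegral_mono ?_ ?_
        · exact (ENNReal.measurable_ofReal.comp
            ((((measurable_const.sub measurable_id).const_mul _).exp).mul
              (measurable_gaussianPDFReal 0 v)))
        · intro y hy
          rw [gaussianPDF_def]
          refine ENNReal.ofReal_le_ofReal ?_
          refine le_mul_of_one_le_left (gaussianPDFReal_nonneg 0 v y) ?_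
          refine Real.one_le_exp (by nlinarith [Set.mem_Iic.mp hy])
    _ ≤ ∫⁻ y, ENNReal.ofReal (Real.exp ((-C / v) * (C - y)) * gaussianPDFReal 0 v y) :=
        setLIntegral_le_lintegral _ _
    _ = ∫⁻ y, ENNReal.ofReal (Real.exp (-C ^ 2 / (2 * v))) *
          ENNReal.ofReal (gaussianPDFReal C v y) := by
        refine lintegral_congr fun y => ?_
        rw [key y, ENNReal.ofReal_mul (Real.exp_nonneg _)]
    _ = ENNReal.ofReal (Real.exp (-C ^ 2 / (2 * v))) := by
        rw [lintegral_const_mul _ (measurable_gaussianPDFReal C v).ennreal_ofReal,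
          lintegral_gaussianPDFReal_eq_one C hv, mul_one]

/-- For the exit time `τ^x` of the drifted Brownian motion
`x + μt + σB_t` from `(a, x₀)` with `x₀ = (a+b)/2`:
`sup_{x∈(a,x₀)} P(τ^x > t) ≤ e^{(b-a)μ/(2σ²)} e^{-μ²t/(2σ²)}` for all `t > 0`. -/
theorem exit_time_half_interval_bound {Ω : Type} [MeasurableSpace Ω] (P : Measure Ω)
    (B : ℝ → Ω → ℝ) (hB : IsStandardBM P B) (a b σ μ : ℝ) (hab : a < b)
    (hσ : 0 < σ) (hμ : 0 < μ) :
    ∀ t : ℝ, 0 < t →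
      (⨆ x : Set.Ioo a ((a + b) / 2),
          (P {ω | t < exitTime a ((a + b) / 2) σ μ (x : ℝ) B ω}).toReal) ≤
        Real.exp ((b - a) * μ / (2 * σ ^ 2)) * Real.exp (-(μ ^ 2 * t) / (2 * σ ^ 2)) := by
  intro t ht
  haveI := hB.isProb
  have hx₀ : a < (a + b) / 2 := by linarith
  haveI : Nonempty ↥(Set.Ioo a ((a + b) / 2)) :=
    Set.nonempty_coe_sort.mpr (Set.nonempty_Ioo.mpr hx₀)
  set RHS := Real.exp ((b - a) * μ / (2 * σ ^ 2)) * Real.exp (-(μ ^ 2 * t) / (2 * σ ^ 2)) with hRHS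
  refine ciSup_le fun x => ?_
  obtain ⟨x, hxa, hxb⟩ := x
  simp only
  set C : ℝ := ((b - a) / 2 - μ * t) / σ with hC
  -- the event is contained in {B t ≤ C}
  have hsub : {ω | t < exitTime a ((a + b) / 2) σ μ x B ω} ⊆ {ω | B t ω ≤ C} := by
    intro ω hω
    simp only [Set.mem_setOf_eq] at hω ⊢
    have hmem : x + σ * B t ω + μ * t ∈ Set.Ioo a ((a + b) / 2) := by
      by_contra h
      have hle : exitTime a ((a + b) / 2) σ μ x B ω ≤ t :=
        csInf_le ⟨0, fun s hs => hs.1.le⟩ ⟨ht, h⟩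
      linarith
    have h2 := hmem.2
    rw [hC, le_div_iff₀ hσ]
    nlinarith
  have hmap : P.map (B t) = gaussianReal 0 (Real.toNNReal t) := by
    have h := hB.gauss 0 t le_rfl ht.le
    have : (fun ω => B t ω - B 0 ω) = B t := by
      funext ω; rw [hB.start]; ring
    rw [this, sub_zero] at h
    exact h
  have hv : Real.toNNReal t ≠ 0 := by
    simp [Real.toNNReal_eq_zero, not_le, ht]
  have hmeas : P {ω | B t ω ≤ C} = (gaussianReal 0 (Real.toNNReal t)) (Set.Iic C) := by
    rw [← hmap, Measure.map_apply (hB.meas t) measurableSet_Iic]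
    rfl
  have hPle : (P {ω | t < exitTime a ((a + b) / 2) σ μ x B ω}).toReal
      ≤ (P {ω | B t ω ≤ C}).toReal :=
    ENNReal.toReal_mono (measure_ne_top _ _) (measure_mono hsub)
  by_cases hcase : μ * t ≤ b - a
  · -- trivial case: RHS ≥ 1
    have h1 : (P {ω | t < exitTime a ((a + b) / 2) σ μ x B ω}).toReal ≤ 1 := by
      have := prob_le_one (μ := P) (s := {ω | t < exitTime a ((a + b) / 2) σ μ x B ω})
      simpa using ENNReal.toReal_mono ENNReal.one_ne_top this
    refine h1.trans ?_
    rw [hRHS, ← Real.exp_add]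
    refine Real.one_le_exp ?_
    rw [← add_div]
    refine div_nonneg (by nlinarith) (by positivity)
  · push_neg at hcase
    have hCneg : C ≤ 0 := by
      rw [hC]
      refine div_nonpos_of_nonpos_of_nonneg (by nlinarith) hσ.le
    have htail := gaussian_Iic_le hv hCneg
    have hvt : ((Real.toNNReal t : NNReal) : ℝ) = t := Real.coe_toNNReal t ht.le
    calc (P {ω | t < exitTime a ((a + b) / 2) σ μ x B ω}).toReal
        ≤ (P {ω | B t ω ≤ C}).toReal := hPle
      _ = ((gaussianReal 0 (Real.toNNReal t)) (Set.Iic C)).toReal := by rw [hmeas]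
      _ ≤ Real.exp (-C ^ 2 / (2 * t)) := by
          have := ENNReal.toReal_mono ENNReal.ofReal_ne_top htail
          rwa [ENNReal.toReal_ofReal (Real.exp_nonneg _), hvt] at this
      _ ≤ RHS := by
          rw [hRHS, ← Real.exp_add]
          refine Real.exp_le_exp.mpr ?_
          rw [← add_div, hC, div_pow, div_le_div_iff₀ (by positivity) (by positivity)]
          have hcancel : ((b - a) / 2 - μ * t) ^ 2 / σ ^ 2 * (2 * σ ^ 2)
              = 2 * ((b - a) / 2 - μ * t) ^ 2 := by
            field_simp
          rw [neg_mul, hcancel]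
          nlinarith [sq_nonneg (b - a)]
end
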